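/- Let m ≥ 1 be an odd integer, a = m²+1, k ≥ 1 an integer, and q = 2ak+m an odd prime power; set n = (q²+1)/a and s = (n−1)/2. Fix an integer α with 1 ≤ α ≤ k, and let Z = C_{s+1} ∪ C_{s+2} ∪ ... ∪ C_{s+(αq+mk)} ⊆ Z/nZ. Then the cardinality of Z₁ := Z ∩ (−qZ) equals 4α(aα+m). -/

import Mathlib

set_option maxHeartbeats 4000000


lemma core_count (m k α a q n L U : ℤ)
    (hm : 1 ≤ m) (hk : 1 ≤ k) (hα : 1 ≤ α) (hαk : α ≤ k)
    (ha : a = m^2+1) (hq : q = 2*a*k+m) (hn : n = 2*k*q+2*m*k+1)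
    (hL : L = (k-α)*q+k+1) (hU : U = (k+α)*q+2*m*k+k) :
    (((Finset.Icc (1-α*q) (α*q+2*m*k)).filter
        (fun t => (q*t - L) % n ≤ U - L)).card : ℤ) = 4*α*(a*α+m) := by
  have ha2 : 2 ≤ a := by nlinarith
  have hq0 : 0 < q := by nlinarith
  have hn0 : 0 < n := by nlinarith
  set h : ℤ := 2*m*k+1 with hh
  have hh0 : 0 < h := by positivity
  have han : a*n = q^2+1 := by simp only [ha, hq, hn]; ring
  have hah : a*h = m*q+1 := by simp only [ha, hq, hh]; ring
  have hnh : n = 2*k*q + h := by rw [hn, hh]; ring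
  have hUL : U - L = 2*α*q + 2*m*k - 1 := by rw [hU, hL]; ring
  have h2mkq : 2*m*k < q := by nlinarith
  have hULn : U - L < n - 1 := by rw [hUL, hn]; nlinarith
  have hL1 : k+1 ≤ L := by rw [hL]; nlinarith
  set f : ℤ → ℤ := fun c => (c*n + L + q - 1)/q with hf
  set g : ℤ → ℤ := fun c => (c*n + U)/q with hg
  have hiff : ∀ c t : ℤ, t ∈ Finset.Icc (f c) (g c) ↔ (L ≤ q*t - c*n ∧ q*t - c*n ≤ U) := by
    intro c t
    rw [Finset.mem_Icc]
    constructor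
    · rintro ⟨h1, h2⟩
      have h2' : t*q ≤ c*n + U := by
        by_contra hcon
        push_neg at hcon
        have : g c < t := by
          have := (Int.ediv_lt_iff_lt_mul (b := t) hq0).mpr hcon
          simpa [hg] using this
        omega
      have h1' : c*n + L + q - 1 < (t+1)*q := by
        have : f c < t + 1 := by omega
        have := (Int.ediv_lt_iff_lt_mul (a := c*n + L + q - 1) (b := t+1) hq0).mp (by simpa [hf] using this)
        exact this
      constructor <;> nlinarith
    · rintro ⟨h1, h2⟩
      constructor
      · have : c*n + L + q - 1 < (t+1)*q := by nlinarith
        have := (Int.ediv_lt_iff_lt_mul (a := c*n + L + q - 1) (b := t+1) hq0).mpr this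
        simp only [hf]
        omega
      · have : t ≤ (c*n+U)/q := (Int.le_ediv_iff_mul_le hq0).mpr (by nlinarith)
        simpa [hg] using this
  have hL2 : α + 1 ≤ L := by omega
  have hbound : (a*α+m-1)*n + U ≤ (α*q+2*m*k)*q + q - 1 := by
    have e : (α*q+2*m*k)*q + q - 1 - ((a*α+m-1)*n + U) = (q+1)*(k-α) := by
      simp only [hU, hn, hq, ha]; ring
    have e5 : (0:ℤ) ≤ (q+1)*(k-α) := mul_nonneg (by omega) (by omega)
    linarith
  -- the partition
  have hpart : (Finset.Icc (1-α*q) (α*q+2*m*k)).filter (fun t => (q*t - L) % n ≤ U - L)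
      = (Finset.Icc (-(a*α)) (a*α+m-1)).biUnion (fun c => Finset.Icc (f c) (g c)) := by
    ext t
    simp only [Finset.mem_filter, Finset.mem_biUnion, Finset.mem_Icc]
    constructor
    · rintro ⟨⟨ht1, ht2⟩, hmod⟩
      refine ⟨(q*t - L)/n, ?_, ?_⟩
      · set c := (q*t - L)/n with hc
        have hr : q*t - c*n - L = (q*t - L) % n := by
          rw [hc]
          have := Int.mul_ediv_add_emod (q*t - L) n
          linarith
        have hr0 : 0 ≤ q*t - c*n - L := by
          rw [hr]; exact Int.emod_nonneg _ (by omega)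
        have hr1 : q*t - c*n - L ≤ U - L := by rw [hr]; exact hmod
        constructor
        · have e1 : q - α*q^2 ≤ q*t := by nlinarith [mul_le_mul_of_nonneg_left ht1 hq0.le]
          have e4 : ((-(a*α))-1)*n = -α*q^2 - α - n := by linear_combination (-α) * han
          have e5 : U < q + α + n := by
            rw [hU, hn]
            nlinarith [mul_nonneg (show (0:ℤ) ≤ q-1 by omega) (show (0:ℤ) ≤ 1+k-α by omega)]
          have hlt : ((-(a*α))-1)*n < c*n := by linarith
          have := lt_of_mul_lt_mul_right hlt hn0.le
          omega
        · have e1 : q*t ≤ α*q^2 + 2*m*k*q := by nlinarith [mul_le_mul_of_nonneg_left ht2 hq0.le]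
          have e4 : (a*α+m)*n = α*q^2 + α + m*n := by linear_combination α*han
          have e5 : m*n = 2*m*k*q + 2*m^2*k + m := by rw [hn]; ring
          have e6 : (0:ℤ) < m^2*k := by positivity
          have hlt : c*n < (a*α+m)*n := by linarith
          have := lt_of_mul_lt_mul_right hlt hn0.le
          omega
      · rw [← Finset.mem_Icc, hiff]
        set c := (q*t - L)/n with hc
        have hr : q*t - c*n - L = (q*t - L) % n := by
          rw [hc]
          have := Int.mul_ediv_add_emod (q*t - L) n
          linarith
        have hr0 : 0 ≤ q*t - c*n - L := by
          rw [hr]; exact Int.emod_nonneg _ (by omega)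
        have hr1 : q*t - c*n - L ≤ U - L := by rw [hr]; exact hmod
        constructor <;> linarith
    · rintro ⟨c, ⟨hc1, hc2⟩, htc⟩
      rw [← Finset.mem_Icc, hiff] at htc
      obtain ⟨hL', hU'⟩ := htc
      have ht1 : 1 - α*q ≤ t := by
        have e1 : (-(a*α))*n ≤ c*n := mul_le_mul_of_nonneg_right hc1 hn0.le
        have e2 : (-(a*α))*n = -α*q^2 - α := by linear_combination (-α) * han
        have e3 : -α*q^2 + 1 ≤ q*t := by linarith
        by_contra hcon
        push_neg at hcon
        have h4 : t ≤ -(α*q) := by omega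
        have h5 : q*t ≤ q*(-(α*q)) := mul_le_mul_of_nonneg_left h4 hq0.le
        nlinarith
      have ht2 : t ≤ α*q + 2*m*k := by
        have e1 : c*n ≤ (a*α+m-1)*n := mul_le_mul_of_nonneg_right hc2 hn0.le
        by_contra hcon
        push_neg at hcon
        have h4 : α*q + 2*m*k + 1 ≤ t := by omega
        have h5 : q*(α*q + 2*m*k + 1) ≤ q*t := mul_le_mul_of_nonneg_left h4 hq0.le
        nlinarith
      refine ⟨⟨ht1, ht2⟩, ?_⟩
      have : (q*t - L) % n = (q*t - c*n - L) % n := by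
        have : q*t - L = (q*t - c*n - L) + n*c := by ring
        rw [this, Int.add_mul_emod_self_left]
      rw [this, Int.emod_eq_of_lt (by linarith) (by linarith)]
      linarith
  rw [hpart]
  -- disjointness
  have hdisj : ∀ c ∈ Finset.Icc (-(a*α)) (a*α+m-1), ∀ c' ∈ Finset.Icc (-(a*α)) (a*α+m-1),
      c ≠ c' → Disjoint (Finset.Icc (f c) (g c)) (Finset.Icc (f c') (g c')) := by
    intro c _ c' _ hne
    rw [Finset.disjoint_left]
    intro t ht ht'
    rw [hiff] at ht ht'
    rcases lt_or_gt_of_ne hne with hlt | hlt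
    · have h1 : (1:ℤ) ≤ c' - c := by omega
      have : 1*n ≤ (c' - c) * n := mul_le_mul_of_nonneg_right h1 hn0.le
      nlinarith
    · have h1 : (1:ℤ) ≤ c - c' := by omega
      have : 1*n ≤ (c - c') * n := mul_le_mul_of_nonneg_right h1 hn0.le
      nlinarith
  rw [Finset.card_biUnion hdisj]
  set D : ℤ → ℤ := fun c => (c*n+L-1+2*m*k)/q - (c*n+L-1)/q with hD
  have hq0' : q ≠ 0 := ne_of_gt hq0
  have hh0' : h ≠ 0 := ne_of_gt hh0
  have hD0 : ∀ c : ℤ, 0 ≤ D c := by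
    intro c
    have := Int.ediv_le_ediv hq0 (show c*n+L-1 ≤ c*n+L-1+2*m*k by nlinarith)
    simp only [hD]
    omega
  have hD1 : ∀ c : ℤ, D c ≤ 1 := by
    intro c
    have e1 : (c*n+L-1+2*m*k)/q ≤ (c*n+L-1+1*q)/q :=
      Int.ediv_le_ediv hq0 (by nlinarith)
    rw [Int.add_mul_ediv_right _ _ hq0'] at e1
    simp only [hD]
    omega
  have hfg' : ∀ c : ℤ, g c + 1 - f c = 2*α + D c := by
    intro c
    have e1 : f c = (c*n+L-1)/q + 1 := by
      have : c*n + L + q - 1 = (c*n+L-1) + 1*q := by ring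
      simp only [hf, this, Int.add_mul_ediv_right _ _ hq0']
    have e2 : g c = (c*n+L-1+2*m*k)/q + 2*α := by
      have : c*n + U = (c*n+L-1+2*m*k) + (2*α)*q := by rw [hU, hL]; ring
      simp only [hg, this, Int.add_mul_ediv_right _ _ hq0']
    simp only [hD]
    omega
  have hcardIcc : ∀ c : ℤ, (((Finset.Icc (f c) (g c)).card : ℕ) : ℤ) = 2*α + D c := by
    intro c
    rw [Int.card_Icc]
    rw [Int.toNat_of_nonneg (by have := hD0 c; have := hfg' c; omega)]
    exact hfg' c
  -- the sum
  have hsum1 : ((∑ c ∈ Finset.Icc (-(a*α)) (a*α+m-1), (Finset.Icc (f c) (g c)).card : ℕ) : ℤ)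
      = ∑ c ∈ Finset.Icc (-(a*α)) (a*α+m-1), (2*α + D c) := by
    push_cast
    exact Finset.sum_congr rfl (fun c _ => by have := hcardIcc c; push_cast at this; omega)
  rw [hsum1, Finset.sum_add_distrib, Finset.sum_const, nsmul_eq_mul]
  have hcardC : ((Finset.Icc (-(a*α)) (a*α+m-1)).card : ℤ) = 2*a*α+m := by
    rw [Int.card_Icc]
    have e : a*α+m-1 + 1 - (-(a*α)) = 2*a*α+m := by ring
    rw [e, Int.toNat_of_nonneg (by nlinarith)]
  rw [hcardC]
  -- the D-sum
  have hDsum : ∑ c ∈ Finset.Icc (-(a*α)) (a*α+m-1), D c = 2*α*m := by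
    have e1 : ∀ c ∈ Finset.Icc (-(a*α)) (a*α+m-1), D c = (if D c = 1 then (1:ℤ) else 0) := by
      intro c _
      rcases (show D c = 0 ∨ D c = 1 by have := hD0 c; have := hD1 c; omega) with h' | h' <;>
        simp [h']
    rw [Finset.sum_congr rfl e1, Finset.sum_boole]
    have hbij : ((Finset.Icc (-(a*α)) (a*α+m-1)).filter (fun c => D c = 1)).card
        = (Finset.Icc (1-α*m) (α*m)).card := by
      apply Finset.card_bij'
        (i := fun c _ => (c*n+L-1+2*m*k)/q - (2*k*c + k - α))
        (j := fun M _ => (M*q - k - 1)/h)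
      · -- i maps into target
        rintro c hc
        rw [Finset.mem_filter, Finset.mem_Icc] at hc
        obtain ⟨⟨hc1, hc2⟩, hDc⟩ := hc
        rw [Finset.mem_Icc]
        set W : ℤ := (c*n+L-1+2*m*k)/q with hW
        set M : ℤ := W - (2*k*c + k - α) with hM
        have hXW : (c*n+L-1)/q < W := by simp only [hD] at hDc; omega
        have hWq1 : c*n+L ≤ W*q := by
          have := (Int.ediv_lt_iff_lt_mul (a := c*n+L-1) (b := W) hq0).mp hXW
          omega
        have hWq2 : W*q ≤ c*n+L-1+2*m*k := by
          have h1 := Int.mul_ediv_add_emod (c*n+L-1+2*m*k) q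
          have h2 := Int.emod_nonneg (c*n+L-1+2*m*k) hq0'
          rw [← hW] at h1
          linarith
        -- key identity : M*q - k - 1 - c*h = W*q - (c*n + L)
        have hkey : M*q - k - 1 - c*h = W*q - (c*n + L) := by
          rw [hM, hnh, hL]; ring
        constructor
        · -- 1 - α*m ≤ M
          by_contra hcon
          push_neg at hcon
          have h4 : M + α*m ≤ 0 := by omega
          have h5 : (M + α*m)*q ≤ 0*q := mul_le_mul_of_nonneg_right h4 hq0.le
          have e1 : (-(a*α))*h ≤ c*h := mul_le_mul_of_nonneg_right hc1 hh0.le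
          have e2 : (-(a*α))*h = -(α*m*q) - α := by linear_combination (-α)*hah
          nlinarith
        · -- M ≤ α*m
          by_contra hcon
          push_neg at hcon
          have h4 : (1:ℤ) ≤ M - α*m := by omega
          have h5 : 1*q ≤ (M - α*m)*q := mul_le_mul_of_nonneg_right h4 hq0.le
          have e1 : c*h ≤ (a*α+m-1)*h := mul_le_mul_of_nonneg_right hc2 hh0.le
          have e2 : (a*α+m-1)*h = α*m*q + α + (m-1)*(2*m*k+1) := by
            linear_combination α*hah
          have e3 : q = 2*(m^2+1)*k + m := by rw [hq, ha]
          nlinarith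
      · -- j maps into source
        rintro M hM
        rw [Finset.mem_Icc] at hM
        obtain ⟨hM1, hM2⟩ := hM
        rw [Finset.mem_filter, Finset.mem_Icc]
        set c : ℤ := (M*q - k - 1)/h with hc
        set r : ℤ := (M*q - k - 1) % h with hr
        have hdiv : h*c + r = M*q - k - 1 := by rw [hc, hr]; exact Int.mul_ediv_add_emod _ _
        have hr0 : 0 ≤ r := Int.emod_nonneg _ hh0'
        have hr1 : r < h := Int.emod_lt_of_pos _ hh0
        have hmk0 : 0 ≤ m*(k-α) := mul_nonneg (by omega) (by omega)
        -- r ≠ h - 1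
        have hrne : r ≠ h - 1 := by
          intro hcon
          have e1 : M*q - k = h*c + h := by omega
          have e2 : M + m*k = h*(M*a - m*(c+1)) := by
            linear_combination (-m)*e1 - M*hah
          have hu1 : 1 ≤ M + m*k := by nlinarith
          have hu2 : M + m*k ≤ 2*m*k := by nlinarith
          rcases le_or_gt (M*a - m*(c+1)) 0 with hu | hu
          · have : h*(M*a - m*(c+1)) ≤ 0 := mul_nonpos_of_nonneg_of_nonpos hh0.le hu
            linarith
          · have h4 : (1:ℤ) ≤ M*a - m*(c+1) := hu
            have : h*1 ≤ h*(M*a - m*(c+1)) := mul_le_mul_of_nonneg_left h4 hh0.le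
            linarith [hh]
        have hr2 : r ≤ 2*m*k - 1 := by omega
        have hMq1 : (1-α*m)*q ≤ M*q := mul_le_mul_of_nonneg_right hM1 hq0.le
        have hMq2 : M*q ≤ α*m*q := by
          have := mul_le_mul_of_nonneg_right hM2 hq0.le
          nlinarith
        refine ⟨⟨?_, ?_⟩, ?_⟩
        · -- -(a*α) ≤ c
          have e2 : (-(a*α))*h = -(α*m*q) - α := by linear_combination (-α)*hah
          have e3 : q = 2*(m^2+1)*k + m := by rw [hq, ha]
          have hch : (-(a*α))*h ≤ c*h := by nlinarith
          exact le_of_mul_le_mul_right (by linarith [hch]) hh0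
        · -- c ≤ a*α+m-1
          have e2 : (a*α+m-1)*h = α*m*q + α + (m-1)*(2*m*k+1) := by
            linear_combination α*hah
          have hch : c*h < (a*α+m-1)*h + 1 := by nlinarith
          have : c*h ≤ (a*α+m-1)*h := by omega
          exact le_of_mul_le_mul_right (by linarith [this]) hh0
        · -- D c = 1
          set W : ℤ := M + 2*k*c + k - α with hW
          have hkey : W*q - (c*n + L) = r := by
            rw [hW, hnh, hL]; linear_combination -hdiv
          have hWq1 : c*n+L ≤ W*q := by omega
          have hWq2 : W*q ≤ c*n+L-1+2*m*k := by omega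
          have e1 : W ≤ (c*n+L-1+2*m*k)/q := (Int.le_ediv_iff_mul_le hq0).mpr hWq2
          have e2 : (c*n+L-1)/q < W := by
            rw [Int.ediv_lt_iff_lt_mul hq0]
            nlinarith
          have := hD1 c
          simp only [hD] at this ⊢
          omega
      · -- j ∘ i = id
        rintro c hc
        rw [Finset.mem_filter, Finset.mem_Icc] at hc
        obtain ⟨⟨hc1, hc2⟩, hDc⟩ := hc
        set W : ℤ := (c*n+L-1+2*m*k)/q with hW
        have hXW : (c*n+L-1)/q < W := by simp only [hD] at hDc; omega
        have hWq1 : c*n+L ≤ W*q := by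
          have := (Int.ediv_lt_iff_lt_mul (a := c*n+L-1) (b := W) hq0).mp hXW
          omega
        have hWq2 : W*q ≤ c*n+L-1+2*m*k := by
          have h1 := Int.mul_ediv_add_emod (c*n+L-1+2*m*k) q
          have h2 := Int.emod_nonneg (c*n+L-1+2*m*k) hq0'
          rw [← hW] at h1
          linarith
        have hkey : (W - (2*k*c + k - α))*q - k - 1 - c*h = W*q - (c*n + L) := by
          rw [hnh, hL]; ring
        have e1 : (W - (2*k*c + k - α))*q - k - 1 = (W*q - (c*n+L)) + c*h := by omega
        rw [e1, Int.add_mul_ediv_right _ _ hh0',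
          Int.ediv_eq_zero_of_lt (by omega) (by omega), zero_add]
      · -- i ∘ j = id
        rintro M hM
        rw [Finset.mem_Icc] at hM
        obtain ⟨hM1, hM2⟩ := hM
        set c : ℤ := (M*q - k - 1)/h with hc
        set r : ℤ := (M*q - k - 1) % h with hr
        have hdiv : h*c + r = M*q - k - 1 := by rw [hc, hr]; exact Int.mul_ediv_add_emod _ _
        have hr0 : 0 ≤ r := Int.emod_nonneg _ hh0'
        have hr1 : r < h := Int.emod_lt_of_pos _ hh0
        have hmk0 : 0 ≤ m*(k-α) := mul_nonneg (by omega) (by omega)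
        have hrne : r ≠ h - 1 := by
          intro hcon
          have e1 : M*q - k = h*c + h := by omega
          have e2 : M + m*k = h*(M*a - m*(c+1)) := by
            linear_combination (-m)*e1 - M*hah
          have hu1 : 1 ≤ M + m*k := by nlinarith
          have hu2 : M + m*k ≤ 2*m*k := by nlinarith
          rcases le_or_gt (M*a - m*(c+1)) 0 with hu | hu
          · have : h*(M*a - m*(c+1)) ≤ 0 := mul_nonpos_of_nonneg_of_nonpos hh0.le hu
            linarith
          · have h4 : (1:ℤ) ≤ M*a - m*(c+1) := hu
            have : h*1 ≤ h*(M*a - m*(c+1)) := mul_le_mul_of_nonneg_left h4 hh0.le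
            linarith [hh]
        have hr2 : r ≤ 2*m*k - 1 := by omega
        set W : ℤ := M + 2*k*c + k - α with hW
        have hkey : W*q - (c*n + L) = r := by
          rw [hW, hnh, hL]; linear_combination -hdiv
        have e1 : c*n+L-1+2*m*k = (2*m*k - 1 - r) + W*q := by omega
        rw [e1, Int.add_mul_ediv_right _ _ hq0',
          Int.ediv_eq_zero_of_lt (by omega) (by omega), zero_add]
        rw [hW]; ring
    rw [hbij, Int.card_Icc]
    have e : α*m + 1 - (1-α*m) = 2*α*m := by ring
    rw [e, Int.toNat_of_nonneg (by positivity)]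
  rw [hDsum]
  ring


lemma emod_mem_Icc_iff (n A len x : ℤ) (hn : 0 < n) (hA : 0 ≤ A) (hlen : 0 ≤ len)
    (hAl : A + len < n) :
    (A ≤ x % n ∧ x % n ≤ A + len) ↔ (x - A) % n ≤ len := by
  have h1 := Int.emod_nonneg x (ne_of_gt hn)
  have h2 := Int.emod_lt_of_pos x hn
  have h5 : (x - A) % n = (x % n - A) % n := by
    rw [Int.sub_emod, Int.emod_eq_of_lt hA (by omega)]
  constructor
  · rintro ⟨g1, g2⟩
    rw [h5, Int.emod_eq_of_lt (by omega) (by omega)]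
    omega
  · intro g
    rcases le_or_gt 0 (x % n - A) with hd | hd
    · rw [h5, Int.emod_eq_of_lt hd (by omega)] at g
      omega
    · have e1 : (x % n - A) % n = (x % n - A) + n := by
        have : ((x % n - A) + n*1) % n = (x % n - A) % n := Int.add_mul_emod_self_left _ _ _
        rw [← this, Int.emod_eq_of_lt (by omega) (by omega)]
        omega
      rw [h5, e1] at g
      omega

/-- Theorem 3.4: with `Z = C_{s+1} ∪ ⋯ ∪ C_{s+(αq+mk)}`,
`|Z ∩ (−qZ)| = 4α(aα+m)`. -/
theorem card_Z1_case_I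
    (m a k q n s α : ℕ)
    (hm1 : 1 ≤ m) (hmodd : Odd m)
    (ha : a = m ^ 2 + 1)
    (hk : 1 ≤ k)
    (hq : q = 2 * a * k + m)
    (hqodd : Odd q) (hqpp : IsPrimePow q)
    (hn : n = (q ^ 2 + 1) / a)
    (hs : s = (n - 1) / 2)
    (hα1 : 1 ≤ α) (hαk : α ≤ k)
    (Z : Set (ZMod n))
    (hZ : Z = {x : ZMod n | ∃ i : ℕ, 1 ≤ i ∧ i ≤ α * q + m * k ∧
      (x = ((s + i : ℕ) : ZMod n) ∨ x = -((s + i : ℕ) : ZMod n))}) :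
    (Z ∩ ((fun x : ZMod n => -(q : ZMod n) * x) '' Z)).ncard = 4 * α * (a * α + m) := by
  classical
  have ha0 : 0 < a := by rw [ha]; positivity
  have hx : q ^ 2 + 1 = a * (4*a*k^2 + 4*m*k + 1) := by rw [hq, ha]; ring
  have hn' : n = 4*a*k^2 + 4*m*k + 1 := by rw [hn, hx, Nat.mul_div_cancel_left _ ha0]
  have hs' : s = k*q + m*k := by
    have e1 : n - 1 = 4*a*k^2+4*m*k := by rw [hn']; omega
    have e2 : 4*a*k^2+4*m*k = 2*(k*q+m*k) := by rw [hq]; ring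
    rw [hs, e1, e2, Nat.mul_div_cancel_left _ two_pos]
  have hn2s : n = 2*s+1 := by rw [hn', hs', hq]; ring
  set N : ℕ := α*q + m*k with hN
  have hq1 : 1 ≤ q := by rw [hq]; omega
  have hNs : N ≤ s := by
    have h1 : α*q ≤ k*q := Nat.mul_le_mul_right q hαk
    rw [hN, hs']; omega
  have hN1 : 1 ≤ N := by
    have h1 : 1*1 ≤ α*q := Nat.mul_le_mul hα1 hq1
    rw [hN]; omega
  have hn0 : 0 < n := by omega
  haveI : NeZero n := ⟨by omega⟩
  have han : a*n = q^2+1 := by rw [hn']; exact hx.symm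
  -- ZMod facts
  have hq2 : (q : ZMod n)^2 = -1 := by
    have h0 : ((a*n : ℕ) : ZMod n) = 0 := by
      push_cast [ZMod.natCast_self]; ring
    rw [han] at h0
    push_cast at h0
    linear_combination h0
  have hcastinj : ∀ u v : ℕ, u < n → v < n → ((u : ZMod n) = (v : ZMod n)) → u = v := by
    intro u v hu hv he
    have := congrArg ZMod.val he
    rwa [ZMod.val_cast_of_lt hu, ZMod.val_cast_of_lt hv] at this
  have hmemZ : ∀ x : ZMod n, x ∈ Z ↔ ∃ j : ℕ, (s+1-N ≤ j ∧ j ≤ s+N) ∧ x = (j : ZMod n) := by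
    intro x
    rw [hZ]; simp only [Set.mem_setOf_eq]
    constructor
    · rintro ⟨i, hi1, hi2, hx' | hx'⟩
      · exact ⟨s+i, ⟨by omega, by omega⟩, hx'⟩
      · refine ⟨s+1-i, ⟨by omega, by omega⟩, ?_⟩
        have hadd : ((s+i : ℕ) : ZMod n) + ((s+1-i : ℕ) : ZMod n) = 0 := by
          rw [← Nat.cast_add]
          have e : (s+i) + (s+1-i) = n := by omega
          rw [e, ZMod.natCast_self]
        rw [hx']; linear_combination -hadd
    · rintro ⟨j, ⟨hj1, hj2⟩, rfl⟩
      rcases le_or_gt (s+1) j with hj | hj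
      · exact ⟨j - s, by omega, by omega, Or.inl (by congr 1; omega)⟩
      · refine ⟨s+1-j, by omega, by omega, Or.inr ?_⟩
        have hadd : ((s+(s+1-j) : ℕ) : ZMod n) + ((j : ℕ) : ZMod n) = 0 := by
          rw [← Nat.cast_add]
          have e : (s+(s+1-j)) + j = n := by omega
          rw [e, ZMod.natCast_self]
        linear_combination hadd
  have hZiff : ∀ u : ℕ, u < n → (((u : ℕ) : ZMod n) ∈ Z ↔ (s+1-N ≤ u ∧ u ≤ s+N)) := by
    intro u hu
    rw [hmemZ]
    constructor
    · rintro ⟨j, ⟨hj1, hj2⟩, he⟩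
      have := hcastinj u j hu (by omega) he
      omega
    · intro h'
      exact ⟨u, h', rfl⟩
  have hmul : ∀ x : ZMod n, (x ∈ (fun y : ZMod n => -(q : ZMod n) * y) '' Z ↔ (q : ZMod n) * x ∈ Z) := by
    intro x
    constructor
    · rintro ⟨y, hy, rfl⟩
      have e : (q : ZMod n) * (-(q:ZMod n) * y) = y := by linear_combination (-y)*hq2
      rwa [e]
    · intro hx
      exact ⟨(q:ZMod n)*x, hx, by linear_combination (-x)*hq2⟩
  have hqj : ∀ j : ℕ, (q:ZMod n) * (j : ZMod n) = ((q*j % n : ℕ) : ZMod n) := by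
    intro j
    rw [ZMod.natCast_mod]; push_cast; ring
  set G : Finset ℕ := (Finset.Icc (s+1-N) (s+N)).filter
      (fun j => q*j % n ∈ Finset.Icc (s+1-N) (s+N)) with hG
  have hGmem : ∀ j : ℕ, j ∈ G ↔ ((s+1-N ≤ j ∧ j ≤ s+N) ∧ (s+1-N ≤ q*j % n ∧ q*j % n ≤ s+N)) := by
    intro j
    rw [hG, Finset.mem_filter, Finset.mem_Icc, Finset.mem_Icc]
  have hsetZ : Z ∩ ((fun x : ZMod n => -(q : ZMod n) * x) '' Z)
      = ↑(G.image (fun j : ℕ => (j : ZMod n))) := by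
    ext x
    constructor
    · rintro ⟨hxZ, hximg⟩
      rw [hmul x] at hximg
      obtain ⟨j, ⟨hj1, hj2⟩, rfl⟩ := (hmemZ x).mp hxZ
      rw [hqj j] at hximg
      have hmlt : q*j % n < n := Nat.mod_lt _ hn0
      have hcc := (hZiff _ hmlt).mp hximg
      exact Finset.mem_coe.mpr (Finset.mem_image.mpr
        ⟨j, (hGmem j).mpr ⟨⟨hj1, hj2⟩, hcc⟩, rfl⟩)
    · intro hx
      obtain ⟨j, hjG, rfl⟩ := Finset.mem_image.mp (Finset.mem_coe.mp hx)
      obtain ⟨⟨hj1, hj2⟩, hc1, hc2⟩ := (hGmem j).mp hjG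
      have hjn : j < n := by omega
      refine ⟨(hZiff j hjn).mpr ⟨hj1, hj2⟩, ?_⟩
      rw [hmul, hqj j]
      exact (hZiff _ (Nat.mod_lt _ hn0)).mpr ⟨hc1, hc2⟩
  rw [hsetZ, Set.ncard_coe_finset]
  have hGlt : ∀ j ∈ G, j < n := by
    intro j hj
    have := (hGmem j).mp hj
    omega
  rw [Finset.card_image_of_injOn (fun u hu v hv he =>
    hcastinj u v (hGlt u (Finset.mem_coe.mp hu)) (hGlt v (Finset.mem_coe.mp hv)) he)]
  -- pass to integers
  have hmZ : (1:ℤ) ≤ (m:ℤ) := by exact_mod_cast hm1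
  have hkZ : (1:ℤ) ≤ (k:ℤ) := by exact_mod_cast hk
  have hαZ : (1:ℤ) ≤ (α:ℤ) := by exact_mod_cast hα1
  have hαkZ : (α:ℤ) ≤ (k:ℤ) := by exact_mod_cast hαk
  have haZ : (a:ℤ) = (m:ℤ)^2+1 := by exact_mod_cast ha
  have hqZ : (q:ℤ) = 2*a*k+m := by exact_mod_cast hq
  have hnZ' : (n:ℤ) = 4*(a:ℤ)*k^2+4*m*k+1 := by exact_mod_cast hn'
  have hnZ : (n:ℤ) = 2*k*q+2*m*k+1 := by rw [hnZ', hqZ]; ring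
  have hsZ : (s:ℤ) = k*q+m*k := by exact_mod_cast hs'
  have hNZ : ((N:ℕ):ℤ) = (α:ℤ)*q+m*k := by exact_mod_cast hN
  have hanZ : (a:ℤ)*n = (q:ℤ)^2+1 := by exact_mod_cast han
  have hNsZ : ((N:ℕ):ℤ) ≤ (s:ℤ) := by exact_mod_cast hNs
  have hN1Z : (1:ℤ) ≤ ((N:ℕ):ℤ) := by exact_mod_cast hN1
  have hn2sZ : (n:ℤ) = 2*(s:ℤ)+1 := by exact_mod_cast hn2s
  have hnZ0 : (0:ℤ) < n := by exact_mod_cast hn0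
  have hL : ((k:ℤ)-α)*q+k+1 = (s:ℤ)+k+1-N := by rw [hsZ, hNZ]; ring
  have hU : ((k:ℤ)+α)*q+2*m*k+k = (s:ℤ)+k+N := by rw [hsZ, hNZ]; ring
  have hcore := core_count m k α a q n (((k:ℤ)-α)*q+k+1) (((k:ℤ)+α)*q+2*m*k+k)
    hmZ hkZ hαZ hαkZ haZ hqZ hnZ rfl rfl
  -- the condition bridge
  have hcond : ∀ j : ℕ, ((s+1-N ≤ q*j % n ∧ q*j % n ≤ s+N) ↔
      ((q:ℤ)*((j:ℤ) - s + m*k) - (((k:ℤ)-α)*q+k+1)) % n ≤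
        (((k:ℤ)+α)*q+2*m*k+k) - (((k:ℤ)-α)*q+k+1)) := by
    intro j
    have e1 : ((q*j % n : ℕ) : ℤ) = ((q:ℤ)*j) % n := by
      push_cast [Int.natCast_mod]; ring_nf
    have hiff := emod_mem_Icc_iff (n:ℤ) ((s:ℤ)+1-N) (2*(N:ℤ)-1) ((q:ℤ)*j)
      hnZ0 (by omega) (by omega) (by omega)
    have hshift : ((q:ℤ)*((j:ℤ) - s + m*k) - (((k:ℤ)-α)*q+k+1)) % n
        = ((q:ℤ)*j - ((s:ℤ)+1-N)) % n := by
      have e2 : (q:ℤ)*((j:ℤ) - s + m*k) - (((k:ℤ)-α)*q+k+1)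
          = ((q:ℤ)*j - ((s:ℤ)+1-N)) + (n:ℤ)*(-((a:ℤ)*k)) := by
        rw [hL]
        linear_combination (-(q:ℤ))*hsZ + (k:ℤ)*hanZ
      rw [e2, Int.add_mul_emod_self_left]
    have e3 : (((k:ℤ)+α)*q+2*m*k+k) - (((k:ℤ)-α)*q+k+1) = 2*(N:ℤ)-1 := by
      rw [hNZ]; ring
    rw [hshift, e3, ← hiff]
    omega
  -- the bijection
  have hbij : G.card = ((Finset.Icc (1-(α:ℤ)*q) ((α:ℤ)*q+2*(m:ℤ)*k)).filter
      (fun t => ((q:ℤ)*t - (((k:ℤ)-α)*q+k+1)) % n ≤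
        (((k:ℤ)+α)*q+2*(m:ℤ)*k+k) - (((k:ℤ)-α)*q+k+1))).card := by
    refine Finset.card_bij' (fun j _ => ((j:ℤ) - s + m*k))
      (fun t _ => (t + s - m*k).toNat) ?_ ?_ ?_ ?_
    · intro j hj
      obtain ⟨⟨hj1, hj2⟩, hc⟩ := (hGmem j).mp hj
      rw [Finset.mem_filter, Finset.mem_Icc]
      have c1 : (s:ℤ) + 1 - ((N:ℕ):ℤ) ≤ (j:ℤ) := by
        have := hj1; omega
      have c2 : (j:ℤ) ≤ (s:ℤ) + ((N:ℕ):ℤ) := by exact_mod_cast hj2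
      refine ⟨⟨by linarith [hNZ], by linarith [hNZ]⟩, (hcond j).mp hc⟩
    · intro t ht
      rw [Finset.mem_filter, Finset.mem_Icc] at ht
      obtain ⟨⟨ht1, ht2⟩, hc⟩ := ht
      rw [hGmem]
      have c3 : (s:ℤ) + 1 - ((N:ℕ):ℤ) ≤ t + s - m*k := by linarith [hNZ]
      have c4 : t + s - m*k ≤ (s:ℤ) + ((N:ℕ):ℤ) := by linarith [hNZ]
      have h0 : (0:ℤ) ≤ t + s - m*k := by linarith [hNsZ]
      have hjz : (((t + s - m*k).toNat : ℕ) : ℤ) = t + s - m*k := by omega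
      refine ⟨⟨by omega, by omega⟩, ?_⟩
      rw [hcond]
      have e : (((t + s - m*k).toNat : ℕ) : ℤ) - s + m*k = t := by omega
      rw [e]
      exact hc
    · intro j hj
      obtain ⟨⟨hj1, hj2⟩, _⟩ := (hGmem j).mp hj
      omega
    · intro t ht
      rw [Finset.mem_filter, Finset.mem_Icc] at ht
      obtain ⟨⟨ht1, ht2⟩, _⟩ := ht
      have c3 : (s:ℤ) + 1 - ((N:ℕ):ℤ) ≤ t + s - m*k := by linarith [hNZ]
      have h0 : (0:ℤ) ≤ t + s - m*k := by linarith [hNsZ]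
      omega
  have : (G.card : ℤ) = ((4 * α * (a * α + m) : ℕ) : ℤ) := by
    rw [hbij]
    push_cast
    push_cast at hcore
    linarith [hcore]
  exact_mod_cast this
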